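/- arXiv:2101.01351 — 3 statements merged into one kernel-verified Lean document; each statement's English description precedes it below -/
import Mathlib

section
/- Let I = ∫₀⁸ (3−x) · ∏_{γ∈C} ( ⟨xω₁+(8−x)ω₃, γ⟩ / ⟨ρ, γ⟩ ) dx (an integral of a rational function of x over [0,8], the denominator being a nonzero constant). Then 23 · 22! · I = 2⁷³·19·23·199·1049; in particular 23 · 22! · I > 0. (This quantity is the invariant ξ(Z) = β(E) for the Pasquier two-orbits variety Pas_{F₄}, whose positivity proves that Pas_{F₄} is K-polystable and hence admits a Kähler–Einstein metric.) -/
open scoped InnerProductSpace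

noncomputable section

namespace PasquierF4

/-- ℝ⁴ with its standard Euclidean inner product. -/
abbrev V : Type := EuclideanSpace ℝ (Fin 4)

/-- The standard basis vectors e₁, e₂, e₃, e₄ (indexed by `Fin 4`). -/
def e (i : Fin 4) : V := EuclideanSpace.single i 1

/-- The simple roots of F₄. -/
def α₁ : V := e 1 - e 2
def α₂ : V := e 2 - e 3
def α₃ : V := e 3
def α₄ : V := (1 / 2 : ℝ) • (e 0 - e 1 - e 2 - e 3)

/-- `rt a b c d` is the vector [a,b,c,d] = aα₁ + bα₂ + cα₃ + dα₄. -/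
def rt (a b c d : ℝ) : V := a • α₁ + b • α₂ + c • α₃ + d • α₄

/-- The fundamental weights of F₄. -/
def ω₁ : V := rt 2 3 4 2
def ω₂ : V := rt 3 6 8 4
def ω₃ : V := rt 2 4 6 3
def ω₄ : V := rt 1 2 3 2

/-- The half-sum of positive roots ρ = [8,15,21,11]. -/
def ρ : V := rt 8 15 21 11

/-- The 24 positive roots of F₄. -/
def PhiPlus : List V :=
  [rt 1 0 0 0, rt 0 1 0 0, rt 0 0 1 0, rt 0 0 0 1, rt 1 1 0 0, rt 0 1 1 0,
   rt 0 0 1 1, rt 1 1 1 0, rt 0 1 1 1, rt 1 1 1 1, rt 0 1 2 0, rt 1 1 2 0,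
   rt 0 1 2 1, rt 1 2 2 0, rt 1 1 2 1, rt 0 1 2 2, rt 1 2 2 1, rt 1 1 2 2,
   rt 1 2 3 1, rt 1 2 2 2, rt 1 2 3 2, rt 1 2 4 2, rt 1 3 4 2, rt 2 3 4 2]

/-- The 22 complementary roots: Φ⁺ with α₂ = [0,1,0,0] and α₄ = [0,0,0,1] removed. -/
def C : List V :=
  [rt 1 0 0 0, rt 0 0 1 0, rt 1 1 0 0, rt 0 1 1 0,
   rt 0 0 1 1, rt 1 1 1 0, rt 0 1 1 1, rt 1 1 1 1, rt 0 1 2 0, rt 1 1 2 0,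
   rt 0 1 2 1, rt 1 2 2 0, rt 1 1 2 1, rt 0 1 2 2, rt 1 2 2 1, rt 1 1 2 2,
   rt 1 2 3 1, rt 1 2 2 2, rt 1 2 3 2, rt 1 2 4 2, rt 1 3 4 2, rt 2 3 4 2]

lemma inner_rt (a b c d a' b' c' d' : ℝ) :
    ⟪rt a b c d, rt a' b' c' d'⟫_ℝ =
      (d/2)*(d'/2) + (a-d/2)*(a'-d'/2) + (b-a-d/2)*(b'-a'-d'/2) + (c-b-d/2)*(c'-b'-d'/2) := by
  simp [rt, α₁, α₂, α₃, α₄, e, PiLp.inner_apply, Fin.sum_univ_four,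
    EuclideanSpace.single_apply, PiLp.add_apply, PiLp.sub_apply, PiLp.smul_apply]
  ring

lemma smul_comb (x : ℝ) : x • rt 2 3 4 2 + (8 - x) • rt 2 4 6 3
    = rt 16 (32 - x) (48 - 2*x) (24 - x) := by
  simp only [rt]
  module

lemma key (x : ℝ) : (3 - x) *
    (C.map fun γ => ⟪x • ω₁ + (8 - x) • ω₃, γ⟫_ℝ / ⟪ρ, γ⟫_ℝ).prod =
    (2251799813685248/27286875 : ℝ) * x^2 + (-1125899906842624/11694375 : ℝ) * x^3 + (202310139510784/4465125 : ℝ) * x^4 + (-308962767405056/29469825 : ℝ) * x^5 + (225812200554496/245581875 : ℝ) * x^6 + (12352325943296/105249375 : ℝ) * x^7 + (-30326764077056/736745625 : ℝ) * x^8 + (213137752064/49116375 : ℝ) * x^9 + (-6912212992/105249375 : ℝ) * x^10 + (-24754782208/736745625 : ℝ) * x^11 + (1034420224/245581875 : ℝ) * x^12 + (-37814272/147349125 : ℝ) * x^13 + (188416/21049875 : ℝ) * x^14 + (-41984/245581875 : ℝ) * x^15 + (1024/736745625 : ℝ) * x^16 := by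
  simp only [C, ω₁, ω₃, ρ, smul_comb, List.map_cons, List.map_nil, List.prod_cons,
    List.prod_nil, inner_rt]
  norm_num
  ring

def Fa (x : ℝ) : ℝ := (2251799813685248/81860625 : ℝ) * x^3 + (-281474976710656/11694375 : ℝ) * x^4 + (202310139510784/22325625 : ℝ) * x^5 + (-154481383702528/88409475 : ℝ) * x^6 + (225812200554496/1719073125 : ℝ) * x^7 + (1544040742912/105249375 : ℝ) * x^8 + (-30326764077056/6630710625 : ℝ) * x^9 + (106568876032/245581875 : ℝ) * x^10 + (-6912212992/1157743125 : ℝ) * x^11 + (-6188695552/2210236875 : ℝ) * x^12 + (1034420224/3192564375 : ℝ) * x^13 + (-18907136/1031443875 : ℝ) * x^14 + (188416/315748125 : ℝ) * x^15 + (-2624/245581875 : ℝ) * x^16 + (1024/12524675625 : ℝ) * x^17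

lemma integral_val :
    (∫ x in (0 : ℝ)..8, (3 - x) *
      (C.map fun γ => ⟪x • ω₁ + (8 - x) • ω₃, γ⟫_ℝ / ⟪ρ, γ⟫_ℝ).prod)
    = (3760523703252873641984/112834802705625 : ℝ) := by
  have hderiv : ∀ x ∈ Set.uIcc (0:ℝ) 8, HasDerivAt Fa ((3 - x) *
      (C.map fun γ => ⟪x • ω₁ + (8 - x) • ω₃, γ⟫_ℝ / ⟪ρ, γ⟫_ℝ).prod) x := by
    intro x _
    rw [key]
    have h := ((((((((((((((((hasDerivAt_pow 3 x).const_mul ((2251799813685248/81860625 : ℝ))).add ((hasDerivAt_pow 4 x).const_mul ((-281474976710656/11694375 : ℝ)))).add ((hasDerivAt_pow 5 x).const_mul ((202310139510784/22325625 : ℝ)))).add ((hasDerivAt_pow 6 x).const_mul ((-154481383702528/88409475 : ℝ)))).add ((hasDerivAt_pow 7 x).const_mul ((225812200554496/1719073125 : ℝ)))).add ((hasDerivAt_pow 8 x).const_mul ((1544040742912/105249375 : ℝ)))).add ((hasDerivAt_pow 9 x).const_mul ((-30326764077056/6630710625 : ℝ)))).add ((hasDerivAt_pow 10 x).const_mul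 ((106568876032/245581875 : ℝ)))).add ((hasDerivAt_pow 11 x).const_mul ((-6912212992/1157743125 : ℝ)))).add ((hasDerivAt_pow 12 x).const_mul ((-6188695552/2210236875 : ℝ)))).add ((hasDerivAt_pow 13 x).const_mul ((1034420224/3192564375 : ℝ)))).add ((hasDerivAt_pow 14 x).const_mul ((-18907136/1031443875 : ℝ)))).add ((hasDerivAt_pow 15 x).const_mul ((188416/315748125 : ℝ)))).add ((hasDerivAt_pow 16 x).const_mul ((-2624/245581875 : ℝ)))).add ((hasDerivAt_pow 17 x).const_mul ((1024/12524675625 : ℝ))))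
    refine (show HasDerivAt Fa _ x from h).congr_deriv ?_
    push_cast
    ring
  have hcont : IntervalIntegrable (fun x => (3 - x) *
      (C.map fun γ => ⟪x • ω₁ + (8 - x) • ω₃, γ⟫_ℝ / ⟪ρ, γ⟫_ℝ).prod)
      MeasureTheory.volume 0 8 := by
    apply Continuous.intervalIntegrable
    have : (fun x : ℝ => (3 - x) *
        (C.map fun γ => ⟪x • ω₁ + (8 - x) • ω₃, γ⟫_ℝ / ⟪ρ, γ⟫_ℝ).prod) =
        fun x : ℝ => (2251799813685248/27286875 : ℝ) * x^2 + (-1125899906842624/11694375 : ℝ) * x^3 + (202310139510784/4465125 : ℝ) * x^4 + (-308962767405056/29469825 : ℝ) * x^5 + (225812200554496/245581875 : ℝ) * x^6 + (12352325943296/105249375 : ℝ) * x^7 + (-30326764077056/736745625 : ℝ) * x^8 + (213137752064/49116375 : ℝ) * x^9 + (-6912212992/105249375 : ℝ) * x^10 + (-24754782208/736745625 : ℝ) * x^11 + (1034420224/245581875 : ℝ) * x^12 + (-37814272/147349125 : ℝ) * x^13 + (188416/21049875 : ℝ) * x^14 + (-41984/245581875 : ℝ) * x^15 + (1024/736745625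 : ℝ) * x^16 := funext key
    rw [this]
    fun_prop
  rw [intervalIntegral.integral_eq_sub_of_hasDerivAt hderiv hcont]
  simp only [Fa]
  norm_num


/-- ξ(Z) = 23 · 22! · I for Pas_{F₄} equals 2⁷³·19·23·199·1049 > 0, where
I = ∫₀⁸ (3−x) ∏_{γ∈C} (⟨xω₁+(8−x)ω₃, γ⟩ / ⟨ρ, γ⟩) dx. -/
theorem xi_F4_positive :
    (23 : ℝ) * (Nat.factorial 22 : ℝ) *
        (∫ x in (0 : ℝ)..8, (3 - x) *
          (C.map fun γ => ⟪x • ω₁ + (8 - x) • ω₃, γ⟫_ℝ / ⟪ρ, γ⟫_ℝ).prod)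
      = 2 ^ 73 * 19 * 23 * 199 * 1049 ∧
    0 < (23 : ℝ) * (Nat.factorial 22 : ℝ) *
        (∫ x in (0 : ℝ)..8, (3 - x) *
          (C.map fun γ => ⟪x • ω₁ + (8 - x) • ω₃, γ⟫_ℝ / ⟪ρ, γ⟫_ℝ).prod) := by
  rw [integral_val]
  norm_num [Nat.factorial]

end PasquierF4
end
end

section
/- (23 · 22! · 2¹⁴) / (2⁴·3⁷·5⁴·7²·11) · ∫₀⁸ x²(x−3)(x−8)⁷(x+8)²(x−24)²(x−16)² dx = 2⁷³·19·23·199·1049. In particular ∫₀⁸ x²(x−3)(x−8)⁷(x+8)²(x−24)²(x−16)² dx > 0. -/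
/-- (23 · 22! · 2¹⁴)/(2⁴·3⁷·5⁴·7²·11) · ∫₀⁸ x²(x−3)(x−8)⁷(x+8)²(x−24)²(x−16)² dx
    = 2⁷³·19·23·199·1049; in particular the integral is positive. -/
theorem xi_F4_integral :
    ((23 : ℝ) * (Nat.factorial 22 : ℝ) * 2 ^ 14) / (2 ^ 4 * 3 ^ 7 * 5 ^ 4 * 7 ^ 2 * 11) *
        (∫ x in (0 : ℝ)..8,
          x ^ 2 * (x - 3) * (x - 8) ^ 7 * (x + 8) ^ 2 * (x - 24) ^ 2 * (x - 16) ^ 2)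
      = 2 ^ 73 * 19 * 23 * 199 * 1049 ∧
    0 < ∫ x in (0 : ℝ)..8,
          x ^ 2 * (x - 3) * (x - 8) ^ 7 * (x + 8) ^ 2 * (x - 24) ^ 2 * (x - 16) ^ 2 := by
  have hF : ∀ x : ℝ, HasDerivAt (fun x : ℝ =>
      ((19791209299968:ℝ)/1) * x ^ 3 + ((-17317308137472:ℝ)/1) * x ^ 4 + ((6519760355328:ℝ)/1) * x ^ 5 + ((-3771518156800:ℝ)/3) * x ^ 6 + ((661559181312:ℝ)/7) * x ^ 7 + ((10554966016:ℝ)/1) * x ^ 8 + ((-29615980544:ℝ)/9) * x ^ 9 + ((312213504:ℝ)/1) * x ^ 10 + ((-47251456:ℝ)/11) * x ^ 11 + ((-6043648:ℝ)/3) * x ^ 12 + ((3030528:ℝ)/13) * x ^ 13 + ((-92320:ℝ)/7) * x ^ 14 + ((1288:ℝ)/3) * x ^ 15 + ((-123:ℝ)/16) * x ^ 16 + ((1:ℝ)/17) * x ^ 17)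
      (x ^ 2 * (x - 3) * (x - 8) ^ 7 * (x + 8) ^ 2 * (x - 24) ^ 2 * (x - 16) ^ 2) x := by
    intro x
    have h : HasDerivAt (fun x : ℝ =>
        ((19791209299968:ℝ)/1) * x ^ 3 + ((-17317308137472:ℝ)/1) * x ^ 4 + ((6519760355328:ℝ)/1) * x ^ 5 + ((-3771518156800:ℝ)/3) * x ^ 6 + ((661559181312:ℝ)/7) * x ^ 7 + ((10554966016:ℝ)/1) * x ^ 8 + ((-29615980544:ℝ)/9) * x ^ 9 + ((312213504:ℝ)/1) * x ^ 10 + ((-47251456:ℝ)/11) * x ^ 11 + ((-6043648:ℝ)/3) * x ^ 12 + ((3030528:ℝ)/13) * x ^ 13 + ((-92320:ℝ)/7) * x ^ 14 + ((1288:ℝ)/3) * x ^ 15 + ((-123:ℝ)/16) * x ^ 16 + ((1:ℝ)/17) * x ^ 17)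
        (((19791209299968:ℝ)/1) * (3 * x ^ 2) + ((-17317308137472:ℝ)/1) * (4 * x ^ 3) + ((6519760355328:ℝ)/1) * (5 * x ^ 4) + ((-3771518156800:ℝ)/3) * (6 * x ^ 5) + ((661559181312:ℝ)/7) * (7 * x ^ 6) + ((10554966016:ℝ)/1) * (8 * x ^ 7) + ((-29615980544:ℝ)/9) * (9 * x ^ 8) + ((312213504:ℝ)/1) * (10 * x ^ 9) + ((-47251456:ℝ)/11) * (11 * x ^ 10) + ((-6043648:ℝ)/3) * (12 * x ^ 11) + ((3030528:ℝ)/13) * (13 * x ^ 12) + ((-92320:ℝ)/7) * (14 * x ^ 13) + ((1288:ℝ)/3) * (15 * x ^ 14) + ((-123:ℝ)/16) * (16 * x ^ 15) + ((1:ℝ)/17) * (17 * x ^ 16)) x := by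
      exact (((((((((((((((((hasDerivAt_pow 3 x).const_mul _).add
        ((hasDerivAt_pow 4 x).const_mul _)).add
        ((hasDerivAt_pow 5 x).const_mul _)).add
        ((hasDerivAt_pow 6 x).const_mul _)).add
        ((hasDerivAt_pow 7 x).const_mul _)).add
        ((hasDerivAt_pow 8 x).const_mul _)).add
        ((hasDerivAt_pow 9 x).const_mul _)).add
        ((hasDerivAt_pow 10 x).const_mul _)).add
        ((hasDerivAt_pow 11 x).const_mul _)).add
        ((hasDerivAt_pow 12 x).const_mul _)).add
        ((hasDerivAt_pow 13 x).const_mul _)).add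
        ((hasDerivAt_pow 14 x).const_mul _)).add
        ((hasDerivAt_pow 15 x).const_mul _)).add
        ((hasDerivAt_pow 16 x).const_mul _)).add
        ((hasDerivAt_pow 17 x).const_mul _)))
    convert h using 1
    ring
  have hint : (∫ x in (0 : ℝ)..8,
      x ^ 2 * (x - 3) * (x - 8) ^ 7 * (x + 8) ^ 2 * (x - 24) ^ 2 * (x - 16) ^ 2)
      = 3672386428957884416 / 153153 := by
    rw [intervalIntegral.integral_eq_sub_of_hasDerivAt (fun x _ => hF x)
      ((Continuous.intervalIntegrable (by fun_prop : Continuous fun x : ℝ => x ^ 2 * (x - 3) * (x - 8) ^ 7 * (x + 8) ^ 2 * (x - 24) ^ 2 * (x - 16) ^ 2)) 0 8)]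
    norm_num
  constructor
  · rw [hint, Nat.factorial]
    norm_num [Nat.factorial]
  · rw [hint]; norm_num
end

section
/- (−8 · 7! · 2³·3⁴) / (2³·3⁴·5) · ∫₀³ x(x−2)(x−3)²(x−6)(x+6)(x−12) dx = 2⁴·3⁹·5·11. In particular ∫₀³ x(x−2)(x−3)²(x−6)(x+6)(x−12) dx < 0. -/
lemma integral_val :
    (∫ x in (0 : ℝ)..3,
      x * (x - 2) * (x - 3) ^ 2 * (x - 6) * (x + 6) * (x - 12)) = -120285/56 := by
  have h : ∀ x ∈ Set.uIcc (0:ℝ) 3,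
      HasDerivAt (fun x : ℝ => x^8/8 - 20/7*x^7 + 27/2*x^6 + 90*x^5 - 999*x^4 + 3240*x^3 - 3888*x^2)
        (x * (x - 2) * (x - 3) ^ 2 * (x - 6) * (x + 6) * (x - 12)) x := by
    intro x _
    have h := ((((((((hasDerivAt_pow 8 x).div_const 8).sub
      ((hasDerivAt_pow 7 x).const_mul ((20:ℝ)/7))).add
      ((hasDerivAt_pow 6 x).const_mul ((27:ℝ)/2))).add
      ((hasDerivAt_pow 5 x).const_mul (90:ℝ))).sub
      ((hasDerivAt_pow 4 x).const_mul (999:ℝ))).add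
      ((hasDerivAt_pow 3 x).const_mul (3240:ℝ))).sub
      ((hasDerivAt_pow 2 x).const_mul (3888:ℝ)))
    refine h.congr_deriv ?_
    push_cast
    ring
  rw [intervalIntegral.integral_eq_sub_of_hasDerivAt h (by
    apply Continuous.intervalIntegrable; continuity)]
  norm_num

/-- (−8 · 7! · 2³·3⁴)/(2³·3⁴·5) · ∫₀³ x(x−2)(x−3)²(x−6)(x+6)(x−12) dx
    = 2⁴·3⁹·5·11; in particular the integral is negative. -/
theorem xi_A1G2_integral :
    (-8 : ℝ) * (Nat.factorial 7 : ℝ) * (2 ^ 3 * 3 ^ 4) / (2 ^ 3 * 3 ^ 4 * 5) *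
        (∫ x in (0 : ℝ)..3,
          x * (x - 2) * (x - 3) ^ 2 * (x - 6) * (x + 6) * (x - 12))
      = 2 ^ 4 * 3 ^ 9 * 5 * 11 ∧
    (∫ x in (0 : ℝ)..3,
      x * (x - 2) * (x - 3) ^ 2 * (x - 6) * (x + 6) * (x - 12)) < 0 := by
  rw [integral_val]
  norm_num [Nat.factorial]
end
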